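/- Lemma 3.1, first estimate: let α ∈ (0,1), let 0 = t_0 < ⋯ < t_N = T be a partition, and let φ^0, …, φ^N be elements of the real Hilbert space L²(Ω) (Ω a measurable subset of ℝ^d). Then for every 1 ≤ n ≤ N, (1/2) Σ_{j=1}^{n} K^{n,j}_{1−α}(‖φ^j‖² − ‖φ^{j−1}‖²) ≤ ⟨ Σ_{j=1}^{n} K^{n,j}_{1−α}(φ^j − φ^{j−1}), φ^n ⟩, i.e. (1/2) D^α_{t_n} ‖φ^n‖² ≤ (D^α_{t_n} φ^n, φ^n). -/

import Mathlib

open Finset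

/-- The kernel `k_β(s) = s^(β-1)/Γ(β)`. -/
noncomputable def kker (β s : ℝ) : ℝ := s ^ (β - 1) / Real.Gamma β

/-- The discrete L1 kernels `K^{n,j}_{1-α}`. -/
noncomputable def Kd (α : ℝ) (t : ℕ → ℝ) (n j : ℕ) : ℝ :=
  (kker (2 - α) (t n - t (j - 1)) - kker (2 - α) (t n - t j)) / (t j - t (j - 1))

/-- The complementary discrete kernels `P^{n,i}_α`, defined by downward recursion. -/
noncomputable def Pd (α : ℝ) (t : ℕ → ℝ) (n i : ℕ) : ℝ :=
  if i = n then 1 / Kd α t n n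
  else (1 / Kd α t i i) *
    ∑ j ∈ (Finset.Ioc i n).attach,
      Pd α t n j.1 * (Kd α t j.1 (i + 1) - Kd α t j.1 i)
termination_by n - i
decreasing_by
  have h := Finset.mem_Ioc.mp j.2
  omega

open MeasureTheory

/-- Abel-summation nonnegativity lemma. -/
lemma abel_aux (K d : ℕ → ℝ) :
    ∀ n, 1 ≤ n → (∀ i, i ≤ n → 0 ≤ d i) → (∀ i, 1 ≤ i → i ≤ n → 0 ≤ K i) →
    (∀ i, 1 ≤ i → i + 1 ≤ n → K i ≤ K (i + 1)) →
    -(K n * d n) ≤ ∑ i ∈ Finset.range n, K (i + 1) * (d i - d (i + 1)) := by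
  intro n
  induction n with
  | zero => intro h; omega
  | succ n ih =>
    intro _ hd hK hKm
    rcases Nat.eq_zero_or_pos n with rfl | hn
    · rw [Finset.sum_range_one]
      have h1 : 0 ≤ K 1 := hK 1 le_rfl le_rfl
      have h2 : 0 ≤ d 0 := hd 0 (by omega)
      nlinarith
    · rw [Finset.sum_range_succ]
      have IH := ih hn (fun i hi => hd i (by omega)) (fun i h1 h2 => hK i h1 (by omega))
        (fun i h1 h2 => hKm i h1 (by omega))
      have hmono : K n ≤ K (n + 1) := hKm n hn le_rfl
      have hdn : 0 ≤ d n := hd n (by omega)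
      nlinarith

/-- Lemma 3.1, first estimate: for `φ^0, …, φ^N ∈ L²(Ω)` and `1 ≤ n ≤ N`,
`(1/2) D^α_{t_n} ‖φ^n‖² ≤ (D^α_{t_n} φ^n, φ^n)`. -/
theorem discrete_caputo_half_square_estimate
    (d : ℕ) (Ω : Set (Fin d → ℝ)) (hΩ : MeasurableSet Ω)
    (α T : ℝ) (N : ℕ) (t : ℕ → ℝ)
    (hα0 : 0 < α) (hα1 : α < 1) (hT : 0 < T)
    (ht0 : t 0 = 0) (htN : t N = T)
    (hmono : ∀ j, j < N → t j < t (j + 1))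
    (φ : ℕ → Lp ℝ 2 (volume.restrict Ω)) :
    ∀ n, 1 ≤ n → n ≤ N →
      (1 / 2) * ∑ j ∈ Finset.Icc 1 n, Kd α t n j * (‖φ j‖ ^ 2 - ‖φ (j - 1)‖ ^ 2)
        ≤ (inner ℝ (∑ j ∈ Finset.Icc 1 n, Kd α t n j • (φ j - φ (j - 1))) (φ n) : ℝ) := by
  intro n hn1 hnN
  -- strict monotonicity of t up to N
  have hSM : ∀ j, j ≤ N → ∀ i, i < j → t i < t j := by
    intro j
    induction j with
    | zero => intro _ i hi; omega
    | succ j ih =>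
      intro hj i hi
      have h1 : t j < t (j + 1) := hmono j (by omega)
      rcases Nat.lt_or_ge i j with h | h
      · exact (ih (by omega) i h).trans h1
      · have : i = j := by omega
        subst this; exact h1
  have hΓ : 0 < Real.Gamma (2 - α) := Real.Gamma_pos_of_pos (by linarith)
  have hexp : (2 : ℝ) - α - 1 = 1 - α := by ring
  -- concavity of kker (2-α) on [0,∞)
  have hconc : ConcaveOn ℝ (Set.Ici 0) (kker (2 - α)) := by
    have h := (Real.concaveOn_rpow (p := 1 - α) (by linarith) (by linarith)).smul
      (c := 1 / Real.Gamma (2 - α)) (by positivity)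
    have e : kker (2 - α) = fun x => (1 / Real.Gamma (2 - α)) • x ^ (1 - α) := by
      funext s
      simp [kker, hexp, smul_eq_mul, div_eq_mul_inv, mul_comm]
    rw [e]; exact h
  -- nonnegativity of the kernels
  have hKnn : ∀ j, 1 ≤ j → j ≤ n → 0 ≤ Kd α t n j := by
    intro j h1 h2
    have hb : (0:ℝ) ≤ t n - t j := by
      rcases Nat.lt_or_ge j n with h | h
      · exact (sub_nonneg.mpr (hSM n hnN j h).le)
      · have : j = n := by omega
        subst this; simp
    have hbc : t n - t j < t n - t (j - 1) := by
      have := hSM j (by omega) (j - 1) (by omega)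
      linarith
    have hnum : kker (2 - α) (t n - t j) ≤ kker (2 - α) (t n - t (j - 1)) := by
      unfold kker
      rw [hexp]
      have h := Real.rpow_le_rpow hb hbc.le (by linarith : (0:ℝ) ≤ 1 - α)
      exact div_le_div_of_nonneg_right h hΓ.le
    have hden : 0 < t j - t (j - 1) := by
      have := hSM j (by omega) (j - 1) (by omega); linarith
    exact div_nonneg (by linarith) hden.le
  -- monotonicity of the kernels in j
  have hKmono : ∀ j, 1 ≤ j → j + 1 ≤ n → Kd α t n j ≤ Kd α t n (j + 1) := by
    intro j h1 h2
    set x := t n - t (j + 1) with hx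
    set y := t n - t j with hy
    set z := t n - t (j - 1) with hz
    have hx0 : (0:ℝ) ≤ x := by
      rcases Nat.lt_or_ge (j + 1) n with h | h
      · exact sub_nonneg.mpr (hSM n hnN (j + 1) h).le
      · have : j + 1 = n := by omega
        rw [hx, this]; simp
    have hxy : x < y := by
      have := hSM (j + 1) (by omega) j (by omega); simp only [hx, hy]; linarith
    have hyz : y < z := by
      have := hSM j (by omega) (j - 1) (by omega); simp only [hy, hz]; linarith
    have hz0 : z ∈ Set.Ici (0:ℝ) := le_trans hx0 (le_of_lt (hxy.trans hyz))
    have key := hconc.slope_anti_adjacent (x := x) (y := y) (z := z)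
      (Set.mem_Ici.mpr hx0) hz0 hxy hyz
    have e1 : Kd α t n j = (kker (2 - α) z - kker (2 - α) y) / (z - y) := by
      unfold Kd
      congr 1
      ring
    have e2 : Kd α t n (j + 1) = (kker (2 - α) y - kker (2 - α) x) / (y - x) := by
      unfold Kd
      have : j + 1 - 1 = j := by omega
      rw [this]
      congr 1
      ring
    rw [e1, e2]
    exact key
  -- Hilbert space reductions
  set K : ℕ → ℝ := Kd α t n with hK
  set a : ℕ → ℝ := fun i => ‖φ i‖ ^ 2 with ha
  set b : ℕ → ℝ := fun i => (inner ℝ (φ i) (φ n) : ℝ) with hb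
  have hRHS : (inner ℝ (∑ j ∈ Finset.Icc 1 n, K j • (φ j - φ (j - 1))) (φ n) : ℝ)
      = ∑ j ∈ Finset.Icc 1 n, K j * (b j - b (j - 1)) := by
    rw [sum_inner]
    refine Finset.sum_congr rfl fun j _ => ?_
    rw [real_inner_smul_left, inner_sub_left]
  rw [hRHS]
  set e : ℕ → ℝ := fun i => a i / 2 - b i + a n / 2 with he
  have hennn : ∀ i, i ≤ n → 0 ≤ e i := by
    intro i _
    have h1 : b i ≤ ‖φ i‖ * ‖φ n‖ := real_inner_le_norm _ _
    have h2 : 2 * ‖φ i‖ * ‖φ n‖ ≤ ‖φ i‖ ^ 2 + ‖φ n‖ ^ 2 := two_mul_le_add_sq _ _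
    simp only [he, ha]
    nlinarith
  have hen : e n = 0 := by
    simp only [he, hb, ha, real_inner_self_eq_norm_sq]
    ring
  have hkey : ∑ j ∈ Finset.Icc 1 n, K j * (b j - b (j - 1))
      - (1 / 2) * ∑ j ∈ Finset.Icc 1 n, K j * (a j - a (j - 1))
      = ∑ i ∈ Finset.range n, K (i + 1) * (e i - e (i + 1)) := by
    rw [Finset.mul_sum, ← Finset.sum_sub_distrib,
      show Finset.Icc 1 n = Finset.Ico 1 (n + 1) by rw [Finset.Ico_add_one_right_eq_Icc],
      Finset.sum_Ico_eq_sum_range]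
    simp only [Nat.add_sub_cancel]
    refine Finset.sum_congr rfl fun i _ => ?_
    have h1 : 1 + i = i + 1 := by omega
    rw [h1]
    simp only [Nat.add_sub_cancel, he]
    ring
  have habel := abel_aux K e n hn1 hennn hKnn hKmono
  rw [hen, mul_zero, neg_zero] at habel
  linarith [hkey ▸ habel]
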